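/- arXiv:2007.15929 — 4 statements merged into one kernel-verified Lean document; each statement's English description precedes it below -/
import Mathlib

section
/- If U is normally distributed with mean 0 and variance σ² (σ > 0) and α > 0, then E[φ_{α,2}(U/σ)] = 0, where φ_{α,2}(u) = (u² - 1/(α+1))·exp(-αu²/2). -/
open MeasureTheory ProbabilityTheory Real Filter Asymptotics
open scoped NNReal ENNReal

lemma integrable_sq_mul_exp {b : ℝ} (hb : 0 < b) :
    Integrable fun x : ℝ => x ^ 2 * Real.exp (-b * x ^ 2) := by
  have := integrable_rpow_mul_exp_neg_mul_sq hb (s := 2) (by norm_num)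
  simpa [abs_pow] using this

lemma integral_sq_mul_exp {b : ℝ} (hb : 0 < b) :
    ∫ x : ℝ, x ^ 2 * Real.exp (-b * x ^ 2)
      = (2 * b)⁻¹ * ∫ x : ℝ, Real.exp (-b * x ^ 2) := by
  set f : ℝ → ℝ := fun x => x * Real.exp (-b * x ^ 2) with hf
  set f' : ℝ → ℝ := fun x => Real.exp (-b * x ^ 2)
      + (-(2 * b)) * (x ^ 2 * Real.exp (-b * x ^ 2)) with hf'
  have hderiv : ∀ x, HasDerivAt f (f' x) x := by
    intro x
    have h1 : HasDerivAt (fun x : ℝ => -b * x ^ 2) (-b * (2 * x)) x := by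
      simpa using ((hasDerivAt_pow 2 x).const_mul (-b))
    have h3 : HasDerivAt f
        (1 * Real.exp (-b * x ^ 2) + x * (Real.exp (-b * x ^ 2) * (-b * (2 * x)))) x :=
      (hasDerivAt_id x).mul h1.exp
    convert h3 using 1
    simp only [hf']
    ring
  have hint' : Integrable f' :=
    (integrable_exp_neg_mul_sq hb).add ((integrable_sq_mul_exp hb).const_mul _)
  have htop : Tendsto f atTop (nhds 0) := by
    have ho : (fun x : ℝ => x ^ (1:ℝ) * Real.exp (-b * x ^ 2)) =o[atTop]
        fun x : ℝ => Real.exp (-(1/2) * x) := rpow_mul_exp_neg_mul_sq_isLittleO_exp_neg hb 1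
    have hg : Tendsto (fun x : ℝ => Real.exp (-(1/2) * x)) atTop (nhds 0) := by
      have hd : Tendsto (fun x : ℝ => x / 2) atTop atTop :=
        tendsto_id.atTop_div_const (by norm_num)
      have := Real.tendsto_exp_neg_atTop_nhds_zero.comp hd
      simp only [Function.comp_def] at this
      convert this using 2 with x
      ring
    have h2 := ho.tendsto_zero_of_tendsto hg
    simp only [Real.rpow_one] at h2
    exact h2
  have hbot : Tendsto f atBot (nhds 0) := by
    have h1 : Tendsto (fun x : ℝ => f (-x)) atTop (nhds 0) := by
      have heq : (fun x : ℝ => f (-x)) = fun x => -(f x) := by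
        funext x; simp only [hf]; ring
      rw [heq]
      simpa using htop.neg
    have h2 := h1.comp tendsto_neg_atBot_atTop
    simp only [Function.comp_def, neg_neg] at h2
    exact h2
  have key := integral_of_hasDerivAt_of_tendsto hderiv hint' hbot htop
  rw [sub_zero] at key
  rw [hf'] at key
  rw [integral_add (integrable_exp_neg_mul_sq hb) ((integrable_sq_mul_exp hb).const_mul _),
    integral_const_mul] at key
  have h2b : (2 * b) ≠ 0 := by positivity
  field_simp at key ⊢
  linarith [key]

theorem phi2_fisher_consistency (α σ : ℝ) (hα : 0 < α) (hσ : 0 < σ) :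
    (∫ u, ((u / σ) ^ 2 - 1 / (α + 1)) * Real.exp (-(α / 2) * (u / σ) ^ 2)
        ∂(gaussianReal 0 (Real.toNNReal (σ ^ 2)))) = 0 := by
  have hσ2 : (0:ℝ) < σ ^ 2 := by positivity
  have hv : (Real.toNNReal (σ ^ 2)) ≠ 0 := by
    simp [Real.toNNReal_eq_zero, not_le, hσ2, hσ.ne']
  set b : ℝ := (α + 1) / (2 * σ ^ 2) with hb
  have hbpos : 0 < b := by positivity
  set C : ℝ := (Real.sqrt (2 * Real.pi * σ ^ 2))⁻¹ with hC
  rw [gaussianReal_of_var_ne_zero _ hv]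
  have hcoe : ((Real.toNNReal (σ ^ 2) : ℝ≥0) : ℝ) = σ ^ 2 := Real.coe_toNNReal _ hσ2.le
  rw [show gaussianPDF 0 (Real.toNNReal (σ ^ 2))
      = fun x => ((Real.toNNReal (gaussianPDFReal 0 (Real.toNNReal (σ ^ 2)) x) : ℝ≥0) : ℝ≥0∞)
      from rfl]
  rw [integral_withDensity_eq_integral_smul
    ((measurable_gaussianPDFReal _ _).real_toNNReal) _]
  have heq : ∀ x : ℝ,
      (Real.toNNReal (gaussianPDFReal 0 (Real.toNNReal (σ ^ 2)) x))
        • (((x / σ) ^ 2 - 1 / (α + 1)) * Real.exp (-(α / 2) * (x / σ) ^ 2))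
      = (C / σ ^ 2) * (x ^ 2 * Real.exp (-b * x ^ 2))
        - (C / (α + 1)) * Real.exp (-b * x ^ 2) := by
    intro x
    have hpdf : gaussianPDFReal 0 (Real.toNNReal (σ ^ 2)) x
        = C * Real.exp (-x ^ 2 / (2 * σ ^ 2)) := by
      simp [gaussianPDFReal, hcoe, hC]
    rw [NNReal.smul_def, smul_eq_mul, Real.coe_toNNReal _ (gaussianPDFReal_nonneg _ _ _), hpdf]
    have hexp : Real.exp (-x ^ 2 / (2 * σ ^ 2)) * Real.exp (-(α / 2) * (x / σ) ^ 2)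
        = Real.exp (-b * x ^ 2) := by
      rw [← Real.exp_add]
      congr 1
      field_simp [hb]
      have hσb : σ ^ 2 * b * 2 = α + 1 := by rw [hb]; field_simp
      linear_combination x ^ 2 * hσb
    rw [show C * Real.exp (-x ^ 2 / (2 * σ ^ 2))
          * (((x / σ) ^ 2 - 1 / (α + 1)) * Real.exp (-(α / 2) * (x / σ) ^ 2))
        = ((x / σ) ^ 2 - 1 / (α + 1)) * C
          * (Real.exp (-x ^ 2 / (2 * σ ^ 2)) * Real.exp (-(α / 2) * (x / σ) ^ 2)) from by ring,
      hexp]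
    field_simp
  rw [MeasureTheory.integral_congr_ae (Filter.Eventually.of_forall heq)]
  rw [integral_sub (((integrable_sq_mul_exp hbpos).const_mul _))
      ((integrable_exp_neg_mul_sq hbpos).const_mul _),
    integral_const_mul, integral_const_mul, integral_sq_mul_exp hbpos]
  have : C / σ ^ 2 * ((2 * b)⁻¹ * ∫ x : ℝ, Real.exp (-b * x ^ 2))
      = C / (α + 1) * ∫ x : ℝ, Real.exp (-b * x ^ 2) := by
    rw [hb]
    have hα1 : α + 1 ≠ 0 := by positivity
    field_simp
  rw [this, sub_self]
end

section
/- For U ~ N(0,1) and α > 0, E[(αU⁴ - ((5α+3)/(α+1))U² + (2α+1)/(α+1)²)·exp(-αU²/2)] = -2/(α+1)^{5/2}. -/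
open MeasureTheory ProbabilityTheory Real Filter
open scoped ENNReal NNReal

/-- `x ^ 2 ≤ c⁻¹ * exp (c * x ^ 2)` for `c > 0`. -/
lemma sq_le_inv_mul_exp {c : ℝ} (hc : 0 < c) (x : ℝ) :
    x ^ 2 ≤ c⁻¹ * Real.exp (c * x ^ 2) := by
  have h := Real.add_one_le_exp (c * x ^ 2)
  rw [le_inv_mul_iff₀ hc]
  nlinarith [sq_nonneg x]

lemma sq_exp_bound {b : ℝ} (hb : 0 < b) (x : ℝ) :
    x ^ 2 * Real.exp (-b * x ^ 2) ≤ (4 / b) * Real.exp (-(b / 2) * x ^ 2) := by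
  have h1 : x ^ 2 ≤ (4 / b) * Real.exp ((b / 4) * x ^ 2) := by
    have := sq_le_inv_mul_exp (c := b / 4) (by positivity) x
    calc x ^ 2 ≤ (b / 4)⁻¹ * Real.exp (b / 4 * x ^ 2) := this
    _ = (4 / b) * Real.exp ((b / 4) * x ^ 2) := by rw [inv_div]
  calc x ^ 2 * Real.exp (-b * x ^ 2)
      ≤ ((4 / b) * Real.exp ((b / 4) * x ^ 2)) * Real.exp (-b * x ^ 2) :=
        mul_le_mul_of_nonneg_right h1 (Real.exp_pos _).le
    _ = (4 / b) * Real.exp ((b / 4) * x ^ 2 + -b * x ^ 2) := by rw [mul_assoc, Real.exp_add]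
    _ ≤ (4 / b) * Real.exp (-(b / 2) * x ^ 2) := by
        have : (b / 4) * x ^ 2 + -b * x ^ 2 ≤ -(b / 2) * x ^ 2 := by nlinarith [sq_nonneg x]
        exact mul_le_mul_of_nonneg_left (Real.exp_le_exp.2 this) (by positivity)

lemma pow4_exp_bound {b : ℝ} (hb : 0 < b) (x : ℝ) :
    x ^ 4 * Real.exp (-b * x ^ 2) ≤ (16 / b ^ 2) * Real.exp (-(b / 2) * x ^ 2) := by
  have h1 : x ^ 2 ≤ (4 / b) * Real.exp ((b / 4) * x ^ 2) := by
    have := sq_le_inv_mul_exp (c := b / 4) (by positivity) x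
    calc x ^ 2 ≤ (b / 4)⁻¹ * Real.exp (b / 4 * x ^ 2) := this
    _ = (4 / b) * Real.exp ((b / 4) * x ^ 2) := by rw [inv_div]
  have h2 : x ^ 4 ≤ (16 / b ^ 2) * Real.exp ((b / 2) * x ^ 2) := by
    have := mul_le_mul h1 h1 (sq_nonneg x) (by positivity)
    calc x ^ 4 = x ^ 2 * x ^ 2 := by ring
      _ ≤ ((4 / b) * Real.exp ((b / 4) * x ^ 2)) * ((4 / b) * Real.exp ((b / 4) * x ^ 2)) := this
      _ = (16 / b ^ 2) * Real.exp ((b / 4) * x ^ 2 + (b / 4) * x ^ 2) := by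
          rw [Real.exp_add]; ring
      _ = (16 / b ^ 2) * Real.exp ((b / 2) * x ^ 2) := by ring_nf
  calc x ^ 4 * Real.exp (-b * x ^ 2)
      ≤ ((16 / b ^ 2) * Real.exp ((b / 2) * x ^ 2)) * Real.exp (-b * x ^ 2) :=
        mul_le_mul_of_nonneg_right h2 (Real.exp_pos _).le
    _ = (16 / b ^ 2) * Real.exp ((b / 2) * x ^ 2 + -b * x ^ 2) := by rw [mul_assoc, Real.exp_add]
    _ = (16 / b ^ 2) * Real.exp (-(b / 2) * x ^ 2) := by ring_nf

lemma integrable_sq_exp {b : ℝ} (hb : 0 < b) :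
    Integrable (fun x : ℝ => x ^ 2 * Real.exp (-b * x ^ 2)) := by
  refine Integrable.mono'
    ((integrable_exp_neg_mul_sq (by positivity : (0:ℝ) < b / 2)).const_mul (4 / b))
    ((by fun_prop : Continuous fun x : ℝ => x ^ 2 * Real.exp (-b * x ^ 2)).aestronglyMeasurable) (ae_of_all _ fun x => ?_)
  rw [Real.norm_eq_abs, abs_of_nonneg (by positivity)]
  exact sq_exp_bound hb x

lemma integrable_pow4_exp {b : ℝ} (hb : 0 < b) :
    Integrable (fun x : ℝ => x ^ 4 * Real.exp (-b * x ^ 2)) := by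
  refine Integrable.mono'
    ((integrable_exp_neg_mul_sq (by positivity : (0:ℝ) < b / 2)).const_mul (16 / b ^ 2))
    ((by fun_prop : Continuous fun x : ℝ => x ^ 4 * Real.exp (-b * x ^ 2)).aestronglyMeasurable) (ae_of_all _ fun x => ?_)
  rw [Real.norm_eq_abs, abs_of_nonneg (by positivity)]
  exact pow4_exp_bound hb x

lemma tendsto_exp_neg_sq_atTop {c : ℝ} (hc : 0 < c) :
    Tendsto (fun x : ℝ => Real.exp (-c * x ^ 2)) atTop (nhds 0) := by
  apply Real.tendsto_exp_atBot.comp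
  have h1 : Tendsto (fun x : ℝ => x ^ 2) atTop atTop := tendsto_pow_atTop two_ne_zero
  have := (h1.const_mul_atTop hc).const_mul_atTop_of_neg (neg_neg_iff_pos.mpr one_pos)
  simpa [neg_mul] using this

lemma tendsto_exp_neg_sq_atBot {c : ℝ} (hc : 0 < c) :
    Tendsto (fun x : ℝ => Real.exp (-c * x ^ 2)) atBot (nhds 0) := by
  have h := (tendsto_exp_neg_sq_atTop hc).comp tendsto_neg_atBot_atTop
  simpa [Function.comp_def, neg_sq] using h

/-- Squeeze: any function bounded in norm by a multiple of a Gaussian tends to 0 at ±∞. -/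
lemma tendsto_of_gauss_bound {f : ℝ → ℝ} {c C : ℝ} (hc : 0 < c)
    (hbd : ∀ x, |f x| ≤ C * Real.exp (-c * x ^ 2)) :
    Tendsto f atTop (nhds 0) ∧ Tendsto f atBot (nhds 0) := by
  constructor
  · refine squeeze_zero_norm hbd ?_
    simpa using (tendsto_exp_neg_sq_atTop hc).const_mul C
  · refine squeeze_zero_norm hbd ?_
    simpa using (tendsto_exp_neg_sq_atBot hc).const_mul C

/-- Second moment: `∫ x² exp(-b x²) = √(π/b) / (2b)`. -/
lemma integral_sq_mul_exp_neg_mul_sq {b : ℝ} (hb : 0 < b) :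
    ∫ x : ℝ, x ^ 2 * Real.exp (-b * x ^ 2) = Real.sqrt (π / b) / (2 * b) := by
  set f : ℝ → ℝ := fun x => -(x / (2 * b)) * Real.exp (-b * x ^ 2) with hf
  set f' : ℝ → ℝ := fun x =>
    x ^ 2 * Real.exp (-b * x ^ 2) - (1 / (2 * b)) * Real.exp (-b * x ^ 2) with hf'
  have hderiv : ∀ x, HasDerivAt f (f' x) x := by
    intro x
    have hv : HasDerivAt (fun x : ℝ => Real.exp (-b * x ^ 2))
        (Real.exp (-b * x ^ 2) * (-b * (2 * x))) x := by
      have h : HasDerivAt (fun x : ℝ => -b * x ^ 2) (-b * (2 * x)) x := by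
        simpa [mul_comm] using ((hasDerivAt_pow 2 x).const_mul (-b))
      exact h.exp
    have hu : HasDerivAt (fun x : ℝ => -(x / (2 * b))) (-(1 / (2 * b))) x := by
      simpa using ((hasDerivAt_id x).div_const (2 * b)).fun_neg
    have := hu.fun_mul hv
    refine this.congr_deriv ?_
    simp only [f']
    field_simp
    ring
  have hint : Integrable f' :=
    (integrable_sq_exp hb).sub ((integrable_exp_neg_mul_sq hb).const_mul _)
  have hbound : ∀ x, |f x| ≤ (1 / (2 * b)) * ((4 / b + 1) * Real.exp (-(b / 2) * x ^ 2)) := by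
    intro x
    have habs : |f x| = |x| / (2 * b) * Real.exp (-b * x ^ 2) := by
      rw [hf]
      rw [abs_mul, abs_neg, abs_div, abs_of_nonneg (Real.exp_pos _).le,
        abs_of_pos (by positivity : (0:ℝ) < 2 * b)]
    rw [habs]
    have h1 : |x| ≤ x ^ 2 + 1 := by nlinarith [sq_nonneg (|x| - 1), sq_abs x]
    have h2 : |x| / (2 * b) * Real.exp (-b * x ^ 2)
        ≤ (1 / (2 * b)) * ((x ^ 2 + 1) * Real.exp (-b * x ^ 2)) := by
      rw [div_mul_eq_mul_div, div_le_iff₀ (by positivity)]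
      have := mul_le_mul_of_nonneg_right h1 (Real.exp_pos (-b * x ^ 2)).le
      calc |x| * Real.exp (-b * x ^ 2) ≤ (x ^ 2 + 1) * Real.exp (-b * x ^ 2) := this
        _ = 1 / (2 * b) * ((x ^ 2 + 1) * Real.exp (-b * x ^ 2)) * (2 * b) := by
            field_simp
    refine h2.trans ?_
    have h3 : (x ^ 2 + 1) * Real.exp (-b * x ^ 2)
        ≤ (4 / b + 1) * Real.exp (-(b / 2) * x ^ 2) := by
      have e1 := sq_exp_bound hb x
      have e2 : Real.exp (-b * x ^ 2) ≤ Real.exp (-(b / 2) * x ^ 2) :=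
        Real.exp_le_exp.2 (by nlinarith [sq_nonneg x])
      nlinarith [Real.exp_pos (-b * x ^ 2), Real.exp_pos (-(b / 2) * x ^ 2)]
    exact mul_le_mul_of_nonneg_left h3 (by positivity)
  obtain ⟨htop, hbot⟩ := tendsto_of_gauss_bound (f := f) (c := b / 2) (C := (1 / (2 * b)) * (4 / b + 1))
    (by positivity) (fun x => by simpa [mul_assoc] using hbound x)
  have hzero : ∫ x, f' x = 0 := by
    simpa using MeasureTheory.integral_of_hasDerivAt_of_tendsto hderiv hint hbot htop
  have hsplit : ∫ x, f' x = (∫ x : ℝ, x ^ 2 * Real.exp (-b * x ^ 2))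
      - (1 / (2 * b)) * ∫ x : ℝ, Real.exp (-b * x ^ 2) := by
    rw [hf']
    rw [integral_sub (integrable_sq_exp hb) ((integrable_exp_neg_mul_sq hb).const_mul _),
      integral_const_mul]
  rw [hzero] at hsplit
  have := integral_gaussian b
  rw [this] at hsplit
  have hr : (1 / (2 * b)) * Real.sqrt (π / b) = Real.sqrt (π / b) / (2 * b) := by ring
  linarith [hsplit, hr]

/-- Fourth moment: `∫ x⁴ exp(-b x²) = 3 √(π/b) / (4b²)`. -/
lemma integral_pow4_mul_exp_neg_mul_sq {b : ℝ} (hb : 0 < b) :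
    ∫ x : ℝ, x ^ 4 * Real.exp (-b * x ^ 2) = 3 * Real.sqrt (π / b) / (4 * b ^ 2) := by
  set f : ℝ → ℝ := fun x => -(x ^ 3 / (2 * b)) * Real.exp (-b * x ^ 2) with hf
  set f' : ℝ → ℝ := fun x =>
    x ^ 4 * Real.exp (-b * x ^ 2) - (3 / (2 * b)) * (x ^ 2 * Real.exp (-b * x ^ 2)) with hf'
  have hderiv : ∀ x, HasDerivAt f (f' x) x := by
    intro x
    have hv : HasDerivAt (fun x : ℝ => Real.exp (-b * x ^ 2))
        (Real.exp (-b * x ^ 2) * (-b * (2 * x))) x := by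
      have h : HasDerivAt (fun x : ℝ => -b * x ^ 2) (-b * (2 * x)) x := by
        simpa [mul_comm] using ((hasDerivAt_pow 2 x).const_mul (-b))
      exact h.exp
    have hu : HasDerivAt (fun x : ℝ => -(x ^ 3 / (2 * b))) (-(3 * x ^ 2 / (2 * b))) x := by
      have := ((hasDerivAt_pow 3 x).div_const (2 * b)).fun_neg
      simpa using this
    have := hu.fun_mul hv
    refine this.congr_deriv ?_
    simp only [f']
    field_simp
    ring
  have hint : Integrable f' :=
    (integrable_pow4_exp hb).sub ((integrable_sq_exp hb).const_mul _)
  have hbound : ∀ x, |f x| ≤ (1 / (2 * b)) * ((16 / b ^ 2 + 4 / b) * Real.exp (-(b / 2) * x ^ 2)) := by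
    intro x
    have habs : |f x| = |x| ^ 3 / (2 * b) * Real.exp (-b * x ^ 2) := by
      rw [hf, abs_mul, abs_neg, abs_div, abs_pow, abs_of_nonneg (Real.exp_pos _).le,
        abs_of_pos (by positivity : (0:ℝ) < 2 * b)]
    rw [habs]
    have h1 : |x| ^ 3 ≤ x ^ 4 + x ^ 2 := by
      nlinarith [sq_abs x, sq_nonneg (|x| - 1), abs_nonneg x, sq_nonneg x, sq_nonneg (x^2)]
    have h2 : |x| ^ 3 / (2 * b) * Real.exp (-b * x ^ 2)
        ≤ (1 / (2 * b)) * ((x ^ 4 + x ^ 2) * Real.exp (-b * x ^ 2)) := by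
      rw [div_mul_eq_mul_div, div_le_iff₀ (by positivity)]
      have := mul_le_mul_of_nonneg_right h1 (Real.exp_pos (-b * x ^ 2)).le
      calc |x| ^ 3 * Real.exp (-b * x ^ 2) ≤ (x ^ 4 + x ^ 2) * Real.exp (-b * x ^ 2) := this
        _ = 1 / (2 * b) * ((x ^ 4 + x ^ 2) * Real.exp (-b * x ^ 2)) * (2 * b) := by field_simp
    refine h2.trans ?_
    have h3 : (x ^ 4 + x ^ 2) * Real.exp (-b * x ^ 2)
        ≤ (16 / b ^ 2 + 4 / b) * Real.exp (-(b / 2) * x ^ 2) := by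
      have e1 := sq_exp_bound hb x
      have e2 := pow4_exp_bound hb x
      nlinarith [Real.exp_pos (-(b / 2) * x ^ 2)]
    exact mul_le_mul_of_nonneg_left h3 (by positivity)
  obtain ⟨htop, hbot⟩ := tendsto_of_gauss_bound (f := f) (c := b / 2)
    (C := (1 / (2 * b)) * (16 / b ^ 2 + 4 / b)) (by positivity)
    (fun x => by simpa [mul_assoc] using hbound x)
  have hzero : ∫ x, f' x = 0 := by
    simpa using MeasureTheory.integral_of_hasDerivAt_of_tendsto hderiv hint hbot htop
  have hsplit : ∫ x, f' x = (∫ x : ℝ, x ^ 4 * Real.exp (-b * x ^ 2))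
      - (3 / (2 * b)) * ∫ x : ℝ, x ^ 2 * Real.exp (-b * x ^ 2) := by
    rw [hf']
    rw [integral_sub (integrable_pow4_exp hb) ((integrable_sq_exp hb).const_mul _),
      integral_const_mul]
  rw [hzero, integral_sq_mul_exp_neg_mul_sq hb] at hsplit
  rw [eq_sub_iff_add_eq, zero_add] at hsplit
  rw [← hsplit]
  ring

theorem J22_expectation (α : ℝ) (hα : 0 < α) :
    (∫ u, (α * u ^ 4 - ((5 * α + 3) / (α + 1)) * u ^ 2 + (2 * α + 1) / (α + 1) ^ 2) *
        Real.exp (-(α * u ^ 2) / 2) ∂(gaussianReal 0 1))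
      = -2 / (α + 1) ^ ((5 : ℝ) / 2) := by
  have hα1 : (0:ℝ) < α + 1 := by linarith
  have hbpos : (0:ℝ) < (α + 1) / 2 := by positivity
  rw [gaussianReal_of_var_ne_zero 0 one_ne_zero]
  have hmeas : Measurable fun x : ℝ => (gaussianPDFReal 0 1 x).toNNReal :=
    (measurable_gaussianPDFReal 0 1).real_toNNReal
  have hpdf : gaussianPDF 0 1 = fun x => ((gaussianPDFReal 0 1 x).toNNReal : ℝ≥0∞) := rfl
  rw [hpdf, integral_withDensity_eq_integral_smul hmeas]
  have hrw : ∀ x : ℝ, ((gaussianPDFReal 0 1 x).toNNReal : ℝ≥0) •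
        ((α * x ^ 4 - ((5 * α + 3) / (α + 1)) * x ^ 2 + (2 * α + 1) / (α + 1) ^ 2) *
          Real.exp (-(α * x ^ 2) / 2))
      = (Real.sqrt (2 * π))⁻¹ *
        ((α * x ^ 4 - ((5 * α + 3) / (α + 1)) * x ^ 2 + (2 * α + 1) / (α + 1) ^ 2) *
          Real.exp (-((α + 1) / 2) * x ^ 2)) := by
    intro x
    rw [NNReal.smul_def, Real.coe_toNNReal _ (gaussianPDFReal_nonneg 0 1 x), smul_eq_mul]
    have hg : gaussianPDFReal 0 1 x = (Real.sqrt (2 * π))⁻¹ * Real.exp (-x ^ 2 / 2) := by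
      simp [gaussianPDFReal]
    rw [hg]
    rw [show Real.exp (-((α + 1) / 2) * x ^ 2) =
        Real.exp (-x ^ 2 / 2) * Real.exp (-(α * x ^ 2) / 2) by
      rw [← Real.exp_add]; ring_nf]
    ring
  simp_rw [hrw]
  rw [MeasureTheory.integral_const_mul]
  have e4 := (integrable_pow4_exp hbpos).const_mul α
  have e2 := (integrable_sq_exp hbpos).const_mul ((5 * α + 3) / (α + 1))
  have e0 := (integrable_exp_neg_mul_sq hbpos).const_mul ((2 * α + 1) / (α + 1) ^ 2)
  have hfun : (fun x : ℝ =>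
      (α * x ^ 4 - ((5 * α + 3) / (α + 1)) * x ^ 2 + (2 * α + 1) / (α + 1) ^ 2) *
        Real.exp (-((α + 1) / 2) * x ^ 2))
      = fun x : ℝ => (α * (x ^ 4 * Real.exp (-((α + 1) / 2) * x ^ 2))
          - (5 * α + 3) / (α + 1) * (x ^ 2 * Real.exp (-((α + 1) / 2) * x ^ 2)))
          + (2 * α + 1) / (α + 1) ^ 2 * Real.exp (-((α + 1) / 2) * x ^ 2) := by
    funext x; ring
  have eA : Integrable (fun x : ℝ => α * (x ^ 4 * Real.exp (-((α + 1) / 2) * x ^ 2))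
      - (5 * α + 3) / (α + 1) * (x ^ 2 * Real.exp (-((α + 1) / 2) * x ^ 2))) := e4.sub e2
  rw [hfun, integral_add eA e0, integral_sub e4 e2,
    MeasureTheory.integral_const_mul, MeasureTheory.integral_const_mul,
    MeasureTheory.integral_const_mul,
    integral_pow4_mul_exp_neg_mul_sq hbpos, integral_sq_mul_exp_neg_mul_sq hbpos,
    integral_gaussian]
  -- algebra
  have hsq : Real.sqrt (π / ((α + 1) / 2)) = Real.sqrt (2 * π) / Real.sqrt (α + 1) := by
    rw [← Real.sqrt_div (by positivity)]
    congr 1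
    field_simp
  have hrp : (α + 1) ^ ((5:ℝ) / 2) = (α + 1) ^ 2 * Real.sqrt (α + 1) := by
    rw [Real.sqrt_eq_rpow, ← Real.rpow_natCast (α + 1) 2, ← Real.rpow_add hα1]
    norm_num
  have hs : Real.sqrt (α + 1) ^ 2 = α + 1 := Real.sq_sqrt hα1.le
  have hsne : Real.sqrt (α + 1) ≠ 0 := by positivity
  have hpne : Real.sqrt (2 * π) ≠ 0 := by positivity
  rw [hsq, hrp]
  field_simp
  ring_nf
end

section
/- Let α > 0, let n ≥ 1, let u₁,…,uₙ, y₁,…,yₙ be reals and x₁,…,xₙ vectors. As α → 0⁺, the RP loss L_n^α(β,σ) = (1/n)·Σᵢ (-σ^{-α/(α+1)}·exp(-(α/2)((yᵢ - xᵢᵀβ)/σ)²)) satisfies: (L_n^α(β,σ) + 1)/α converges to log(σ) + (1/n)·Σᵢ (1/2)((yᵢ - xᵢᵀβ)/σ)² as α → 0⁺, i.e., minimizing L_n^α recovers (up to the constant log√(2π)) the negative log-likelihood in the limit. -/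
theorem rp_loss_limit (n p : ℕ) (hn : 1 ≤ n) (y : Fin n → ℝ) (x : Fin n → Fin p → ℝ)
    (β : Fin p → ℝ) (σ : ℝ) (hσ : 0 < σ) :
    Filter.Tendsto
      (fun α : ℝ =>
        ((1 / (n : ℝ)) * ∑ i, -(σ ^ (-(α / (α + 1))) *
            Real.exp (-(α / 2) * ((y i - ∑ j, x i j * β j) / σ) ^ 2)) + 1) / α)
      (nhdsWithin 0 (Set.Ioi 0))
      (nhds (Real.log σ +
        (1 / (n : ℝ)) * ∑ i, (1 / 2) * ((y i - ∑ j, x i j * β j) / σ) ^ 2)) := by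
  have hn0 : (n : ℝ) ≠ 0 := by positivity
  set r : Fin n → ℝ := fun i => (y i - ∑ j, x i j * β j) / σ with hr
  set F : ℝ → ℝ := fun α =>
    (1 / (n : ℝ)) * ∑ i, -(σ ^ (-(α / (α + 1))) * Real.exp (-(α / 2) * (r i) ^ 2)) + 1 with hF
  have hterm : ∀ i : Fin n,
      HasDerivAt (fun α : ℝ => -(σ ^ (-(α / (α + 1))) * Real.exp (-(α / 2) * (r i) ^ 2)))
        (Real.log σ + (r i) ^ 2 / 2) 0 := by
    intro i
    have hfun : (fun α : ℝ => -(σ ^ (-(α / (α + 1))) * Real.exp (-(α / 2) * (r i) ^ 2)))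
        = fun α : ℝ => -(Real.exp (-(α / (α + 1)) * Real.log σ + -(α / 2) * (r i) ^ 2)) := by
      funext α
      rw [Real.rpow_def_of_pos hσ, mul_comm (Real.log σ), ← Real.exp_add]
    rw [hfun]
    have h1 : HasDerivAt (fun α : ℝ => α / (α + 1)) 1 0 := by
      have := (hasDerivAt_id' (x := (0 : ℝ))).div ((hasDerivAt_id' (x := (0 : ℝ))).add_const 1) (by norm_num)
      refine this.congr_deriv ?_
      norm_num
    have h2 : HasDerivAt (fun α : ℝ => -(α / (α + 1)) * Real.log σ) (-Real.log σ) 0 := by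
      simpa using h1.neg.mul_const (Real.log σ)
    have h3 : HasDerivAt (fun α : ℝ => -(α / 2) * (r i) ^ 2) (-((r i) ^ 2 / 2)) 0 := by
      have := ((hasDerivAt_id (0 : ℝ)).div_const 2).neg.mul_const ((r i) ^ 2)
      refine this.congr_deriv ?_
      ring
    have hg : HasDerivAt (fun α : ℝ => -(α / (α + 1)) * Real.log σ + -(α / 2) * (r i) ^ 2)
        (-(Real.log σ + (r i) ^ 2 / 2)) 0 := by
      have := h2.add h3
      refine this.congr_deriv ?_
      ring
    have he := hg.exp.neg
    refine he.congr_deriv ?_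
    norm_num
  have hsum : HasDerivAt F (Real.log σ + (1 / (n : ℝ)) * ∑ i, (1 / 2) * (r i) ^ 2) 0 := by
    have hs : HasDerivAt (fun α : ℝ => ∑ i, -(σ ^ (-(α / (α + 1))) * Real.exp (-(α / 2) * (r i) ^ 2)))
        (∑ i, (Real.log σ + (r i) ^ 2 / 2)) 0 := HasDerivAt.fun_sum (fun i _ => hterm i)
    have := (hs.const_mul (1 / (n : ℝ))).add_const 1
    refine this.congr_deriv ?_
    rw [Finset.sum_add_distrib, Finset.sum_const, Finset.card_univ, Fintype.card_fin,
      nsmul_eq_mul, mul_add]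
    field_simp
  have hF0 : F 0 = 0 := by
    simp only [hF]
    norm_num
    field_simp
    ring
  have hslope := hasDerivAt_iff_tendsto_slope.mp hsum
  have hmono : nhdsWithin (0 : ℝ) (Set.Ioi 0) ≤ nhdsWithin 0 {(0 : ℝ)}ᶜ :=
    nhdsWithin_mono 0 (fun x hx => ne_of_gt hx)
  have := hslope.mono_left hmono
  refine this.congr (fun α => ?_)
  rw [slope_def_field, hF0, sub_zero, sub_zero]
end

section
/- For the MCP penalty with a > 1 and λ > 0, and any z ∈ ℝ, the function β ↦ (1/2)(z - β)² + p_λ(|β|) — where p_λ(t) = λt - t²/(2a) for 0 ≤ t ≤ aλ and p_λ(t) = aλ²/2 for t > aλ — attains its minimum at β̂ = S(z,λ)/(1 - 1/a) if |z| ≤ aλ and at β̂ = z if |z| > aλ, where S is the soft-thresholding operator. -/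
noncomputable def softThresh (z lam : ℝ) : ℝ :=
  if lam < z then z - lam else if z < -lam then z + lam else 0

noncomputable def mcpPen (a lam t : ℝ) : ℝ :=
  if t ≤ a * lam then lam * t - t ^ 2 / (2 * a) else a * lam ^ 2 / 2

private lemma diff_nonneg' {X Y E : ℝ} (h : Y - X = E) (hE : 0 ≤ E) : X ≤ Y := by linarith

set_option maxHeartbeats 1600000 in
theorem mcp_univariate_minimizer (a lam z : ℝ) (ha : 1 < a) (hlam : 0 < lam) :
    ∀ β : ℝ,
      (1 / 2) * (z - (if |z| ≤ a * lam then softThresh z lam / (1 - 1 / a) else z)) ^ 2 +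
          mcpPen a lam |if |z| ≤ a * lam then softThresh z lam / (1 - 1 / a) else z| ≤
        (1 / 2) * (z - β) ^ 2 + mcpPen a lam |β| := by
  intro β
  have ha0 : (0:ℝ) < a := by linarith
  have ha0' : a ≠ 0 := ne_of_gt ha0
  have hc : (0:ℝ) < 1 - 1/a := by
    have h := (div_lt_one ha0).mpr ha
    linarith
  have hc' : (1:ℝ) - 1/a ≠ 0 := ne_of_gt hc
  have h2a : (0:ℝ) ≤ 2*a := by linarith
  have ha1' : a - 1 ≠ 0 := sub_ne_zero.mpr (ne_of_gt ha)
  have ha1'' : (-1:ℝ) + a ≠ 0 := by intro h; apply ha1'; linarith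
  have hal : (0:ℝ) < a * lam := mul_pos ha0 hlam
  by_cases hz : |z| ≤ a * lam
  · simp only [if_pos hz]
    have hz1 := (abs_le.mp hz).1
    have hz2 := (abs_le.mp hz).2
    by_cases h1 : lam < z
    · -- case lam < z ≤ a*lam
      simp only [softThresh, if_pos h1]
      set b := (z - lam)/(1 - 1/a) with hbdef
      have hb0 : 0 ≤ b := div_nonneg (by linarith) hc.le
      have hbal : b ≤ a * lam := by
        rw [hbdef, div_le_iff₀ hc]
        have he : a * lam * (1 - 1/a) = a * lam - lam := by field_simp
        linarith
      rw [abs_of_nonneg hb0]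
      simp only [mcpPen, if_pos hbal]
      by_cases hβ : |β| ≤ a * lam
      · rw [if_pos hβ]
        rcases le_or_gt 0 β with hβ0 | hβ0
        · rw [abs_of_nonneg hβ0]
          refine diff_nonneg' (E := (1-1/a)/2*(β-b)^2) (by rw [hbdef]; field_simp; ring) ?_
          nlinarith [sq_nonneg (β - b)]
        · rw [abs_of_neg hβ0]
          refine diff_nonneg' (E := (1-1/a)/2*(β-b)^2 - 2*lam*β)
            (by rw [hbdef]; field_simp; ring) ?_
          nlinarith [sq_nonneg (β - b)]
      · rw [if_neg hβ]
        rcases le_or_gt 0 β with hβ0 | hβ0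
        · refine diff_nonneg' (E := (1-1/a)/2*(β-b)^2 + (β - a*lam)^2/(2*a))
            (by rw [hbdef]; field_simp; ring) ?_
          nlinarith [sq_nonneg (β - b), div_nonneg (sq_nonneg (β - a*lam)) h2a]
        · refine diff_nonneg' (E := (1-1/a)/2*(β-b)^2 + (β + a*lam)^2/(2*a) - 2*lam*β)
            (by rw [hbdef]; field_simp; ring) ?_
          nlinarith [sq_nonneg (β - b), div_nonneg (sq_nonneg (β + a*lam)) h2a]
    · by_cases h2 : z < -lam
      · -- case -a*lam ≤ z < -lam
        simp only [softThresh, if_neg h1, if_pos h2]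
        set b := (z + lam)/(1 - 1/a) with hbdef
        have hb0 : b ≤ 0 := div_nonpos_of_nonpos_of_nonneg (by linarith) hc.le
        have hbal : -b ≤ a * lam := by
          rw [hbdef, neg_le, le_div_iff₀ hc]
          have he : -(a * lam) * (1 - 1/a) = -(a*lam) + lam := by field_simp; ring
          linarith
        rw [abs_of_nonpos hb0]
        simp only [mcpPen, if_pos hbal]
        by_cases hβ : |β| ≤ a * lam
        · rw [if_pos hβ]
          rcases le_or_gt 0 β with hβ0 | hβ0
          · rw [abs_of_nonneg hβ0]
            refine diff_nonneg' (E := (1-1/a)/2*(β-b)^2 + 2*lam*β)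
              (by rw [hbdef]; field_simp; ring) ?_
            nlinarith [sq_nonneg (β - b)]
          · rw [abs_of_neg hβ0]
            refine diff_nonneg' (E := (1-1/a)/2*(β-b)^2)
              (by rw [hbdef]; field_simp; ring) ?_
            nlinarith [sq_nonneg (β - b)]
        · rw [if_neg hβ]
          rcases le_or_gt 0 β with hβ0 | hβ0
          · refine diff_nonneg' (E := (1-1/a)/2*(β-b)^2 + (β - a*lam)^2/(2*a) + 2*lam*β)
              (by rw [hbdef]; field_simp; ring) ?_
            nlinarith [sq_nonneg (β - b), div_nonneg (sq_nonneg (β - a*lam)) h2a]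
          · refine diff_nonneg' (E := (1-1/a)/2*(β-b)^2 + (β + a*lam)^2/(2*a))
              (by rw [hbdef]; field_simp; ring) ?_
            nlinarith [sq_nonneg (β - b), div_nonneg (sq_nonneg (β + a*lam)) h2a]
      · -- case |z| ≤ lam
        push_neg at h1 h2
        simp only [softThresh, if_neg (not_lt.mpr h1), if_neg (not_lt.mpr h2), zero_div,
          abs_zero, mcpPen]
        rw [if_pos hal.le]
        by_cases hβ : |β| ≤ a * lam
        · rw [if_pos hβ]
          rcases le_or_gt 0 β with hβ0 | hβ0
          · rw [abs_of_nonneg hβ0]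
            refine diff_nonneg' (E := (lam - z)*β + (1-1/a)/2*β^2) (by field_simp; ring) ?_
            nlinarith [sq_nonneg β]
          · rw [abs_of_neg hβ0]
            refine diff_nonneg' (E := -(lam + z)*β + (1-1/a)/2*β^2) (by field_simp; ring) ?_
            nlinarith [sq_nonneg β]
        · rw [if_neg hβ]
          rcases le_or_gt 0 β with hβ0 | hβ0
          · refine diff_nonneg' (E := (lam - z)*β + (1-1/a)/2*β^2 + (β - a*lam)^2/(2*a))
              (by field_simp; ring) ?_
            nlinarith [sq_nonneg β, div_nonneg (sq_nonneg (β - a*lam)) h2a]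
          · refine diff_nonneg' (E := -(lam + z)*β + (1-1/a)/2*β^2 + (β + a*lam)^2/(2*a))
              (by field_simp; ring) ?_
            nlinarith [sq_nonneg β, div_nonneg (sq_nonneg (β + a*lam)) h2a]
  · -- case a*lam < |z|
    simp only [if_neg hz]
    have hmz : mcpPen a lam |z| = a * lam ^ 2 / 2 := by rw [mcpPen, if_neg hz]
    rw [hmz]
    have hz' : a * lam < |z| := not_le.mp hz
    by_cases hβ : |β| ≤ a * lam
    · have hmb : mcpPen a lam |β| = lam * |β| - |β| ^ 2 / (2*a) := by rw [mcpPen, if_pos hβ]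
      rw [hmb]
      have hβ1 := (abs_le.mp hβ).1
      have hβ2 := (abs_le.mp hβ).2
      rcases abs_cases z with ⟨hze, hzs⟩ | ⟨hze, hzs⟩
      · -- z > a*lam
        rw [hze] at hz'
        rcases le_or_gt 0 β with hβ0 | hβ0
        · rw [abs_of_nonneg hβ0]
          refine diff_nonneg' (E := (a*(z-β)^2 - (β - a*lam)^2)/(2*a))
            (by field_simp; ring) (div_nonneg ?_ h2a)
          nlinarith [sq_nonneg (z - β), mul_nonneg (show (0:ℝ) ≤ z - a*lam by linarith) (show (0:ℝ) ≤ z + a*lam - 2*β by linarith)]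
        · rw [abs_of_neg hβ0]
          refine diff_nonneg' (E := (a*(z-β)^2 - (β + a*lam)^2)/(2*a))
            (by field_simp; ring) (div_nonneg ?_ h2a)
          nlinarith [sq_nonneg (z - β), mul_nonneg (show (0:ℝ) ≤ z - 2*β - a*lam by linarith) (show (0:ℝ) ≤ z + a*lam by linarith)]
      · -- z < -a*lam
        rw [hze] at hz'
        rcases le_or_gt 0 β with hβ0 | hβ0
        · rw [abs_of_nonneg hβ0]
          refine diff_nonneg' (E := (a*(z-β)^2 - (β - a*lam)^2)/(2*a))
            (by field_simp; ring) (div_nonneg ?_ h2a)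
          nlinarith [sq_nonneg (z - β), mul_nonneg (show (0:ℝ) ≤ 2*β - z - a*lam by linarith) (show (0:ℝ) ≤ a*lam - z by linarith)]
        · rw [abs_of_neg hβ0]
          refine diff_nonneg' (E := (a*(z-β)^2 - (β + a*lam)^2)/(2*a))
            (by field_simp; ring) (div_nonneg ?_ h2a)
          nlinarith [sq_nonneg (z - β), mul_nonneg (show (0:ℝ) ≤ -z - a*lam by linarith) (show (0:ℝ) ≤ 2*β + a*lam - z by linarith)]
    · have hmb : mcpPen a lam |β| = a * lam ^ 2 / 2 := by rw [mcpPen, if_neg hβ]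
      rw [hmb]
      nlinarith [sq_nonneg (z - β)]
end
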